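/- Let M = { m^2 · a_i : 1 ≤ i ≤ n, m ≥ 1 } ⊆ A_n be the macro set of squares. Then every element w ∈ A_n satisfies |w|_{G'} ≤ 4n, i.e., every w ∈ ℕ^n is a sum of at most 4n elements of G' = G ∪ M; consequently f_{G'}(s) = ∞ for all s ≥ 4n. -/

import Mathlib

open scoped ENNReal BigOperators

/-- The length of an element of the free abelian monoid `A_n = ℕ^n` with respect to the
standard generators `G = {a_1, …, a_n}`: the sum of its coordinates. -/
def glen {n : ℕ} (w : Fin n → ℕ) : ℕ := ∑ j, w j

/-- The standard generating set `G` of `A_n = ℕ^n`: the standard basis vectors. -/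
def gens (n : ℕ) : Set (Fin n → ℕ) := {w | ∃ i : Fin n, w = fun t => if t = i then 1 else 0}

/-- The length of `w` with respect to a generating set `S`: the minimum number of elements
of `S` (with repetition) summing to `w`; `⊤` if `w` is not representable. -/
noncomputable def slen {n : ℕ} (S : Set (Fin n → ℕ)) (w : Fin n → ℕ) : ℕ∞ :=
  sInf {k : ℕ∞ | ∃ l : Multiset (Fin n → ℕ), (∀ x ∈ l, x ∈ S) ∧ l.sum = w ∧ (l.card : ℕ∞) = k}

/-- The expansion function `f_{G'}(s) = sup { r ∈ ℕ : B_G(r) ⊆ B_{G'}(s) }`, valued in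
`ℝ≥0∞` (so that `⊤` means the ball inclusion holds for every radius `r`). -/
noncomputable def expansion {n : ℕ} (S : Set (Fin n → ℕ)) (s : ℕ) : ℝ≥0∞ :=
  sSup {x : ℝ≥0∞ | ∃ r : ℕ, x = (r : ℝ≥0∞) ∧ ∀ w : Fin n → ℕ, glen w ≤ r → slen S w ≤ (s : ℕ∞)}

/-- One square coordinate vector is a sum of at most one macro. -/
lemma square_vec_multiset {n : ℕ} (M : Set (Fin n → ℕ))
    (hM : M = {w | ∃ i : Fin n, ∃ m : ℕ, 1 ≤ m ∧ w = fun t => if t = i then m ^ 2 else 0})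
    (i : Fin n) (m : ℕ) :
    ∃ l : Multiset (Fin n → ℕ), (∀ x ∈ l, x ∈ M) ∧
      l.sum = (fun t => if t = i then m ^ 2 else 0) ∧ l.card ≤ 1 := by
  rcases Nat.eq_zero_or_pos m with hm | hm
  · refine ⟨0, by simp, ?_, by simp⟩
    subst hm; funext t; simp
  · exact ⟨{fun t => if t = i then m ^ 2 else 0},
      by simpa [hM] using ⟨i, m, hm, rfl⟩, by simp, by simp⟩

/-- Each coordinate vector is a sum of at most four macros. -/
lemma coord_vec_multiset {n : ℕ} (M : Set (Fin n → ℕ))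
    (hM : M = {w | ∃ i : Fin n, ∃ m : ℕ, 1 ≤ m ∧ w = fun t => if t = i then m ^ 2 else 0})
    (i : Fin n) (c : ℕ) :
    ∃ l : Multiset (Fin n → ℕ), (∀ x ∈ l, x ∈ M) ∧
      l.sum = (fun t => if t = i then c else 0) ∧ l.card ≤ 4 := by
  obtain ⟨a, b, c', d, habcd⟩ := Nat.sum_four_squares c
  obtain ⟨la, ha1, ha2, ha3⟩ := square_vec_multiset M hM i a
  obtain ⟨lb, hb1, hb2, hb3⟩ := square_vec_multiset M hM i b
  obtain ⟨lc, hc1, hc2, hc3⟩ := square_vec_multiset M hM i c'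
  obtain ⟨ld, hd1, hd2, hd3⟩ := square_vec_multiset M hM i d
  refine ⟨la + lb + lc + ld, ?_, ?_, ?_⟩
  · intro x hx
    simp only [Multiset.mem_add] at hx
    rcases hx with ((hx | hx) | hx) | hx
    exacts [ha1 x hx, hb1 x hx, hc1 x hx, hd1 x hx]
  · simp only [Multiset.sum_add, ha2, hb2, hc2, hd2]
    funext t
    by_cases h : t = i <;> simp [h, Pi.add_apply, habcd]
  · simp only [Multiset.card_add]
    omega

theorem square_macros_infinite_expansion
    (n : ℕ) (hn : 1 ≤ n)
    (M : Set (Fin n → ℕ))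
    (hM : M = {w | ∃ i : Fin n, ∃ m : ℕ, 1 ≤ m ∧ w = fun t => if t = i then m ^ 2 else 0}) :
    (∀ w : Fin n → ℕ, slen (gens n ∪ M) w ≤ ((4 * n : ℕ) : ℕ∞)) ∧
    (∀ s : ℕ, 4 * n ≤ s → expansion (gens n ∪ M) s = ⊤) := by
  have key : ∀ w : Fin n → ℕ, slen (gens n ∪ M) w ≤ ((4 * n : ℕ) : ℕ∞) := by
    intro w
    choose l hl1 hl2 hl3 using fun i => coord_vec_multiset M hM i (w i)
    set L : Multiset (Fin n → ℕ) := ∑ i, l i with hL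
    have hmem : ∀ x ∈ L, x ∈ gens n ∪ M := by
      intro x hx
      rw [hL, Multiset.mem_sum] at hx
      obtain ⟨i, _, hx⟩ := hx
      exact Or.inr (hl1 i x hx)
    have hsum : L.sum = w := by
      have h1 : L.sum = ∑ i, (l i).sum := by
        rw [hL]
        induction (Finset.univ : Finset (Fin n)) using Finset.induction_on with
        | empty => simp
        | insert _ _ h ih => simp [Finset.sum_insert h, Multiset.sum_add, ih]
      rw [h1]
      funext t
      rw [Finset.sum_apply]
      simp only [hl2]
      simp [Finset.sum_ite_eq]
    have hcard : L.card ≤ 4 * n := by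
      have h2 : L.card = ∑ i, (l i).card := by
        rw [hL]
        induction (Finset.univ : Finset (Fin n)) using Finset.induction_on with
        | empty => simp
        | insert _ _ h ih => simp [Finset.sum_insert h, Multiset.card_add, ih]
      rw [h2]
      calc ∑ i, (l i).card ≤ ∑ _i : Fin n, 4 := Finset.sum_le_sum fun i _ => hl3 i
        _ = 4 * n := by simp [mul_comm]
    have hin : (L.card : ℕ∞) ∈
        {k : ℕ∞ | ∃ l : Multiset (Fin n → ℕ), (∀ x ∈ l, x ∈ gens n ∪ M) ∧
          l.sum = w ∧ (l.card : ℕ∞) = k} := ⟨L, hmem, hsum, rfl⟩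
    calc slen (gens n ∪ M) w ≤ (L.card : ℕ∞) := sInf_le hin
      _ ≤ ((4 * n : ℕ) : ℕ∞) := by exact_mod_cast hcard
  refine ⟨key, fun s hs => ?_⟩
  rw [expansion, sSup_eq_top]
  intro b hb
  obtain ⟨r, hr⟩ := ENNReal.exists_nat_gt hb.ne
  refine ⟨(r : ℝ≥0∞), ⟨r, rfl, fun w _ => ?_⟩, hr⟩
  exact le_trans (key w) (by exact_mod_cast hs)
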